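/- Let u_j = ∑_{k=1}^n w_k/(z_j − x_k) for j = 1, …, m with m ≥ 2n samples z_j that are pairwise distinct and distinct from the x_k. If the x_k are pairwise distinct and the w_k nonzero, then the data (z_j, u_j)_{j=1}^m uniquely determines the multiset {(x_k, w_k)}: any other representation ∑_{k=1}^{n'} w'_k/(z_j − x'_k) = u_j for all j with n' ≤ n, distinct x'_k and nonzero w'_k must coincide with the original. -/
import Mathlib

open Polynomial Finset

/-- Evaluation of the "numerator" polynomial. -/
lemma sru_evalA {F : Type*} [Field F] {n : ℕ} (a : Fin n → F) (c : Fin n → F) (t : F) :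
    (∑ k, C (c k) * ∏ l ∈ Finset.univ.erase k, (X - C (a l))).eval t
      = ∑ k, c k * ∏ l ∈ Finset.univ.erase k, (t - a l) := by
  simp [eval_finset_sum, eval_prod]

/-- Partial fractions as a single quotient. -/
lemma sru_sum_div {F : Type*} [Field F] {n : ℕ} (a : Fin n → F) (c : Fin n → F) (t : F)
    (ht : ∀ k, t - a k ≠ 0) :
    ∑ k, c k / (t - a k)
      = (∑ k, c k * ∏ l ∈ Finset.univ.erase k, (t - a l)) / ∏ k, (t - a k) := by
  rw [eq_div_iff (Finset.prod_ne_zero_iff.mpr fun k _ => ht k), Finset.sum_mul]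
  refine Finset.sum_congr rfl fun k _ => ?_
  rw [← Finset.mul_prod_erase _ _ (Finset.mem_univ k), ← mul_assoc,
    div_mul_cancel₀ _ (ht k)]

/-- Evaluation of the numerator at a pole picks out the residue. -/
lemma sru_evalA_at {F : Type*} [Field F] {n : ℕ} (a : Fin n → F) (c : Fin n → F) (k : Fin n) :
    (∑ j, C (c j) * ∏ l ∈ Finset.univ.erase j, (X - C (a l))).eval (a k)
      = c k * ∏ l ∈ Finset.univ.erase k, (a k - a l) := by
  rw [sru_evalA]
  refine Finset.sum_eq_single k (fun j _ hjk => ?_) (by simp)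
  rw [Finset.prod_eq_zero (Finset.mem_erase.mpr ⟨(Ne.symm hjk), Finset.mem_univ k⟩)]
  · ring
  · simp

lemma sru_natDegree_A {F : Type*} [Field F] {n : ℕ} (a : Fin n → F) (c : Fin n → F) :
    (∑ k, C (c k) * ∏ l ∈ Finset.univ.erase k, (X - C (a l))).natDegree ≤ n - 1 := by
  refine Polynomial.natDegree_sum_le_of_forall_le _ _ fun k _ => ?_
  refine le_trans (natDegree_mul_le) ?_
  have h1 : (∏ l ∈ Finset.univ.erase k, (X - C (a l))).natDegree = n - 1 := by
    rw [Polynomial.natDegree_prod_of_monic _ _ (fun l _ => monic_X_sub_C _)]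
    simp [Finset.card_erase_of_mem]
  simp [h1]

lemma sru_natDegree_B {F : Type*} [Field F] {n : ℕ} (a : Fin n → F) :
    (∏ k, (X - C (a k)) : F[X]).natDegree = n := by
  rw [Polynomial.natDegree_prod_of_monic _ _ (fun l _ => monic_X_sub_C _)]
  simp

/-- Uniqueness of sparse representations from `m ≥ 2n` samples.  Let
`u_j = ∑_k w_k/(z_j − x_k)` with distinct real `x_k`, nonzero `w_k`, and
pairwise distinct samples `z_j` avoiding all poles.  Any other representation
`∑_k w'_k/(z_j − x'_k) = u_j` with `n' ≤ n` spikes, distinct `x'_k` and nonzero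
`w'_k` must coincide with the original (up to a permutation of indices). -/
theorem sparse_recovery_uniqueness (n n' m : ℕ) (hm : 2 * n ≤ m) (hn' : n' ≤ n)
    (x : Fin n → ℝ) (w : Fin n → ℂ) (hx : Function.Injective x) (hw : ∀ k, w k ≠ 0)
    (x' : Fin n' → ℝ) (w' : Fin n' → ℂ) (hx' : Function.Injective x') (hw' : ∀ k, w' k ≠ 0)
    (z : Fin m → ℂ) (hz : Function.Injective z)
    (hzx : ∀ j k, z j ≠ (x k : ℂ)) (hzx' : ∀ j k, z j ≠ (x' k : ℂ))
    (hagree : ∀ j, ∑ k, w' k / (z j - (x' k : ℂ)) = ∑ k, w k / (z j - (x k : ℂ))) :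
    n' = n ∧ ∃ e : Fin n' ≃ Fin n, ∀ k, x (e k) = x' k ∧ w (e k) = w' k := by
  classical
  -- trivial case n = 0
  rcases Nat.eq_zero_or_pos n with hn0 | hn0
  · subst hn0
    have : n' = 0 := Nat.le_zero.mp hn'
    subst this
    exact ⟨rfl, Equiv.refl _, fun k => k.elim0⟩
  -- the complex versions of the nodes
  set a : Fin n → ℂ := fun k => (x k : ℂ) with ha_def
  set a' : Fin n' → ℂ := fun k => (x' k : ℂ) with ha'_def
  have hainj : Function.Injective a := Complex.ofReal_injective.comp hx
  have ha'inj : Function.Injective a' := Complex.ofReal_injective.comp hx'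
  set B : ℂ[X] := ∏ k, (X - C (a k)) with hB_def
  set B' : ℂ[X] := ∏ k, (X - C (a' k)) with hB'_def
  set A : ℂ[X] := ∑ k, C (w k) * ∏ l ∈ Finset.univ.erase k, (X - C (a l)) with hA_def
  set A' : ℂ[X] := ∑ k, C (w' k) * ∏ l ∈ Finset.univ.erase k, (X - C (a' l)) with hA'_def
  -- the key polynomial identity
  have hkey : A' * B = A * B' := by
    have hP : A' * B - A * B' = 0 := by
      refine Polynomial.eq_zero_of_natDegree_lt_card_of_eval_eq_zero _ hz (fun j => ?_) ?_
      · have hB1 : ∀ k, z j - a k ≠ 0 := fun k => sub_ne_zero.mpr (hzx j k)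
        have hB'1 : ∀ k, z j - a' k ≠ 0 := fun k => sub_ne_zero.mpr (hzx' j k)
        have hBz : (∏ k, (z j - a k)) ≠ 0 :=
          Finset.prod_ne_zero_iff.mpr fun k _ => hB1 k
        have hB'z : (∏ k, (z j - a' k)) ≠ 0 :=
          Finset.prod_ne_zero_iff.mpr fun k _ => hB'1 k
        have h1 := sru_sum_div a w (z j) hB1
        have h2 := sru_sum_div a' w' (z j) hB'1
        have hE := hagree j
        rw [h1, h2] at hE
        rw [← sru_evalA a w (z j), ← sru_evalA a' w' (z j), ← hA_def, ← hA'_def] at hE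
        have hE' : A'.eval (z j) * B.eval (z j) = A.eval (z j) * B'.eval (z j) := by
          have hBe : B.eval (z j) = ∏ k, (z j - a k) := by
            rw [hB_def]; simp [eval_prod]
          have hB'e : B'.eval (z j) = ∏ k, (z j - a' k) := by
            rw [hB'_def]; simp [eval_prod]
          rw [hBe, hB'e]
          exact (div_eq_div_iff hB'z hBz).mp hE
        simp [hE']
      · refine lt_of_le_of_lt (Polynomial.natDegree_sub_le _ _) ?_
        have hdA : A.natDegree ≤ n - 1 := by rw [hA_def]; exact sru_natDegree_A a w
        have hdA' : A'.natDegree ≤ n' - 1 := by rw [hA'_def]; exact sru_natDegree_A a' w'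
        have hdB : B.natDegree = n := by rw [hB_def]; exact sru_natDegree_B a
        have hdB' : B'.natDegree = n' := by rw [hB'_def]; exact sru_natDegree_B a'
        have h1 : (A' * B).natDegree ≤ n' - 1 + n :=
          le_trans natDegree_mul_le (by omega)
        have h2 : (A * B').natDegree ≤ n - 1 + n' :=
          le_trans natDegree_mul_le (by omega)
        simp only [Fintype.card_fin]
        omega
    exact sub_eq_zero.mp hP
  -- every x k is among the x' l
  have hforward : ∀ k, ∃ l, x' l = x k := by
    intro k
    have hBk : B.eval (a k) = 0 := by
      rw [hB_def]; simp only [eval_prod, eval_sub, eval_X, eval_C]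
      exact Finset.prod_eq_zero (Finset.mem_univ k) (by ring)
    have hAk : A.eval (a k) ≠ 0 := by
      rw [hA_def, sru_evalA_at]
      refine mul_ne_zero (hw k) (Finset.prod_ne_zero_iff.mpr fun l hl => ?_)
      exact sub_ne_zero.mpr fun h => (Finset.mem_erase.mp hl).1 (hainj h.symm)
    have := congrArg (Polynomial.eval (a k)) hkey
    simp only [eval_mul, hBk, mul_zero] at this
    have hB'k : B'.eval (a k) = 0 := by
      rcases mul_eq_zero.mp this.symm with h | h
      · exact absurd h hAk
      · exact h
    rw [hB'_def] at hB'k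
    simp only [eval_prod, eval_sub, eval_X, eval_C] at hB'k
    obtain ⟨l, -, hl⟩ := Finset.prod_eq_zero_iff.mp hB'k
    exact ⟨l, Complex.ofReal_injective (sub_eq_zero.mp hl).symm⟩
  have hbackward : ∀ k, ∃ l, x l = x' k := by
    intro k
    have hB'k : B'.eval (a' k) = 0 := by
      rw [hB'_def]; simp only [eval_prod, eval_sub, eval_X, eval_C]
      exact Finset.prod_eq_zero (Finset.mem_univ k) (by ring)
    have hA'k : A'.eval (a' k) ≠ 0 := by
      rw [hA'_def, sru_evalA_at]
      refine mul_ne_zero (hw' k) (Finset.prod_ne_zero_iff.mpr fun l hl => ?_)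
      exact sub_ne_zero.mpr fun h => (Finset.mem_erase.mp hl).1 (ha'inj h.symm)
    have := congrArg (Polynomial.eval (a' k)) hkey
    simp only [eval_mul, hB'k, mul_zero] at this
    have hBk : B.eval (a' k) = 0 := by
      rcases mul_eq_zero.mp this with h | h
      · exact absurd h hA'k
      · exact h
    rw [hB_def] at hBk
    simp only [eval_prod, eval_sub, eval_X, eval_C] at hBk
    obtain ⟨l, -, hl⟩ := Finset.prod_eq_zero_iff.mp hBk
    exact ⟨l, Complex.ofReal_injective (sub_eq_zero.mp hl).symm⟩
  -- n = n'
  choose g hg using hforward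
  have hginj : Function.Injective g := fun i j h => hx (by rw [← hg i, ← hg j, h])
  have hcard : n ≤ n' := by
    simpa using Fintype.card_le_of_injective g hginj
  have hnn : n' = n := le_antisymm hn' hcard
  -- build the equivalence
  choose h hh using hbackward
  have hhinj : Function.Injective h := fun i j hij => hx' (by rw [← hh i, ← hh j, hij])
  have hbij : Function.Bijective h :=
    (Fintype.bijective_iff_injective_and_card h).mpr ⟨hhinj, by simp [hnn]⟩
  refine ⟨hnn, Equiv.ofBijective h hbij, fun k => ?_⟩
  have hxe : ∀ k, x (h k) = x' k := hh
  -- B = B'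
  have hBB' : B' = B := by
    rw [hB'_def, hB_def]
    rw [← Equiv.prod_comp (Equiv.ofBijective h hbij) (fun j => X - C (a j))]
    refine Finset.prod_congr rfl fun l _ => ?_
    simp [ha_def, ha'_def, Equiv.ofBijective, hxe l]
  have hBne : B ≠ 0 := by
    have : B.Monic := monic_prod_of_monic _ _ fun l _ => monic_X_sub_C _
    exact this.ne_zero
  have hAA' : A' = A := by
    rw [hBB'] at hkey
    exact mul_right_cancel₀ hBne hkey
  refine ⟨hxe k, ?_⟩
  -- weights
  have h1 : A.eval (a' k) = w (h k) * ∏ l ∈ Finset.univ.erase (h k), (a (h k) - a l) := by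
    have : a' k = a (h k) := by simp [ha_def, ha'_def, hxe k]
    rw [this, hA_def, sru_evalA_at]
  have h2 : A'.eval (a' k) = w' k * ∏ l ∈ Finset.univ.erase k, (a' k - a' l) := by
    rw [hA'_def, sru_evalA_at]
  have hprodeq : (∏ l ∈ Finset.univ.erase (h k), (a (h k) - a l))
      = ∏ l ∈ Finset.univ.erase k, (a' k - a' l) := by
    have himg : (Finset.univ.erase k).image h = Finset.univ.erase (h k) := by
      ext b
      simp only [Finset.mem_image, Finset.mem_erase, Finset.mem_univ, and_true, true_and]
      constructor
      · rintro ⟨c, hc, rfl⟩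
        exact fun hcb => hc (hhinj hcb)
      · intro hb
        obtain ⟨c, rfl⟩ := hbij.surjective b
        exact ⟨c, fun hck => hb (by rw [hck]), rfl⟩
    rw [← himg, Finset.prod_image (fun i _ j _ hij => hhinj hij)]
    refine Finset.prod_congr rfl fun l _ => ?_
    simp [ha_def, ha'_def, hxe k, hxe l]
  have hPk : (∏ l ∈ Finset.univ.erase k, (a' k - a' l)) ≠ 0 := by
    refine Finset.prod_ne_zero_iff.mpr fun l hl => sub_ne_zero.mpr fun hc => ?_
    exact (Finset.mem_erase.mp hl).1 (ha'inj hc.symm)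
  have : w' k * ∏ l ∈ Finset.univ.erase k, (a' k - a' l)
      = w (h k) * ∏ l ∈ Finset.univ.erase k, (a' k - a' l) := by
    rw [← h2, hAA', h1, hprodeq]
  exact (mul_right_cancel₀ hPk this).symm
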